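/- Reversible cellular automata cannot be globally universal: let d ∈ ℕ and let R = (S^{ℤ^d}, G) be a reversible d-dimensional cellular automaton, i.e., its global rule G : S^{ℤ^d} → S^{ℤ^d} is a bijection. Let A = ({0,1}^{ℤ^d}, F) be the cellular automaton whose global rule is the constant map F(c) = 0^{ℤ^d} (every cell in state 0) for all c. Then R does not globally simulate A: there exist no shift vector v, time delay τ, encoder E and decoder D satisfying the conditions of global simulation. -/
import Mathlib


/-- Configurations of a `d`-dimensional cellular automaton over alphabet `S`. -/
abbrev Conf (d : ℕ) (S : Type) : Type := (Fin d → ℤ) → S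

/-- The shift by a vector `v ∈ ℤ^d`: `(σ_v c)(w) = c(v + w)`. -/
def shift {d : ℕ} {S : Type} (v : Fin d → ℤ) (c : Conf d S) : Conf d S :=
  fun w => c (v + w)

/-- A cellular transformaton (sliding block code). -/
def IsCellularTransformaton {d : ℕ} {S T : Type} (F : Conf d S → Conf d T) : Prop :=
  ∃ (k : ℕ) (n : Fin k → (Fin d → ℤ)) (f : (Fin k → S) → T),
    ∀ c v, F c v = f fun i => c (v + n i)

/-- The pattern `u` on the finite region `R` appears in the configuration `c`. -/
def Appears {d : ℕ} {S : Type} (R : Finset (Fin d → ℤ)) (u : (Fin d → ℤ) → S)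
    (c : Conf d S) : Prop :=
  ∃ v : Fin d → ℤ, ∀ w ∈ R, shift v c w = u w

/-- Subshifts of finite type: sets of configurations avoiding a finite list of patterns. -/
def IsSFT {d : ℕ} {S : Type} (X : Set (Conf d S)) : Prop :=
  ∃ (k : ℕ) (R : Fin k → Finset (Fin d → ℤ)) (u : Fin k → (Fin d → ℤ) → S),
    X = {c | ∀ i, ¬ Appears (R i) (u i) c}

/-- The data `(v, τ, E, dom, D)` witnesses that the CA with global rule `G` globally
simulates the CA with global rule `F`; here `D` is a partial map with domain `dom`. -/
def GlobalSimWitness {d : ℕ} {S T : Type} [TopologicalSpace S] [TopologicalSpace T]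
    (F : Conf d S → Conf d S) (G : Conf d T → Conf d T)
    (v : Fin d → ℤ) (τ : ℕ) (E : Conf d S → Conf d T)
    (dom : Set (Conf d T)) (D : Conf d T → Conf d S) : Prop :=
  -- the simulation equation `D(σ_v(G^τ(D⁻¹(c)))) = {F(c)}` (as partial-map images)
  (∀ c : Conf d S,
      (shift v ∘ G^[τ]) '' {x | x ∈ dom ∧ D x = c} ⊆ dom ∧
      D '' ((shift v ∘ G^[τ]) '' {x | x ∈ dom ∧ D x = c}) = {F c}) ∧
  -- (i) the domain of `D` is a subshift of finite type
  IsSFT dom ∧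
  -- (ii) `D` is continuous (on its domain)
  ContinuousOn D dom ∧
  -- (iii) a full-rank matrix `M` with `σ_w ∘ D = D ∘ σ_{M·w}` as partial maps
  (∃ M : Matrix (Fin d) (Fin d) ℤ, M.det ≠ 0 ∧
      ∀ (w : Fin d → ℤ) (x : Conf d T),
        (x ∈ dom ↔ shift (M.mulVec w) x ∈ dom) ∧
        (x ∈ dom → shift w (D x) = D (shift (M.mulVec w) x))) ∧
  -- (iv) `D ∘ E = id`
  (∀ c : Conf d S, E c ∈ dom ∧ D (E c) = c) ∧
  -- (v) `E` is continuous
  Continuous E ∧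
  -- (vi) full-rank matrices `M₁, M₂` with `σ_{M₂·w} ∘ E = E ∘ σ_{M₁·w}`
  (∃ M₁ M₂ : Matrix (Fin d) (Fin d) ℤ, M₁.det ≠ 0 ∧ M₂.det ≠ 0 ∧
      ∀ (w : Fin d → ℤ) (c : Conf d S),
        shift (M₂.mulVec w) (E c) = E (shift (M₁.mulVec w) c))


/-- The CA with global rule `G` globally simulates the CA with global rule `F`. -/
def GloballySimulates {d : ℕ} {S T : Type} [TopologicalSpace S] [TopologicalSpace T]
    (G : Conf d T → Conf d T) (F : Conf d S → Conf d S) : Prop :=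
  ∃ (v : Fin d → ℤ) (τ : ℕ) (E : Conf d S → Conf d T)
    (dom : Set (Conf d T)) (D : Conf d T → Conf d S),
    GlobalSimWitness F G v τ E dom D

/-- A reversible cellular automaton (one whose global rule `G` is a
bijection) cannot globally simulate the CA on alphabet `{0,1}` whose global rule is
the constant map to the all-`0` configuration. -/
lemma shift_shift {d : ℕ} {S : Type} (a b : Fin d → ℤ) (c : Conf d S) :
    shift a (shift b c) = shift (b + a) c := by
  funext w; simp [shift, add_assoc, add_comm, add_left_comm]

lemma shift_zero {d : ℕ} {S : Type} (c : Conf d S) : shift (0 : Fin d → ℤ) c = c := by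
  funext w; simp [shift]

lemma shift_injective {d : ℕ} {S : Type} (a : Fin d → ℤ) :
    Function.Injective (shift (S := S) a) := by
  intro x y h
  have h2 := congrArg (shift (-a)) h
  rwa [shift_shift, shift_shift, add_neg_cancel, shift_zero, shift_zero] at h2

lemma periodic_finite {d : ℕ} {S : Type} [Finite S] {n : ℕ} (hn : 0 < n) :
    Set.Finite {x : Conf d S | ∀ w, shift ((n : ℤ) • w) x = x} := by
  have hkey : ∀ x ∈ {x : Conf d S | ∀ w, shift ((n : ℤ) • w) x = x},
      ∀ w : Fin d → ℤ, x w = x (fun i => w i % (n : ℤ)) := by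
    intro x hx w
    have hq := hx (fun i => w i / (n : ℤ))
    have hw : ((n : ℤ) • (fun i => w i / (n : ℤ)) : Fin d → ℤ) + (fun i => w i % (n : ℤ)) = w := by
      funext i
      simp [Pi.smul_apply, smul_eq_mul, Int.mul_ediv_add_emod]
    calc x w = shift ((n : ℤ) • (fun i => w i / (n : ℤ))) x (fun i => w i % (n : ℤ)) := by
            rw [shift]; rw [hw]
      _ = x (fun i => w i % (n : ℤ)) := by rw [hq]
  have : Finite ↥{x : Conf d S | ∀ w, shift ((n : ℤ) • w) x = x} := by
    refine Finite.of_injective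
      (fun x => (fun g : Fin d → Fin n => x.1 (fun i => ((g i : ℕ) : ℤ)))) ?_
    rintro ⟨x, hx⟩ ⟨y, hy⟩ h
    refine Subtype.ext (funext fun w => ?_)
    have hb : ∀ i : Fin d, (w i % (n : ℤ)).toNat < n := by
      intro i
      have h1 : 0 ≤ w i % (n : ℤ) := Int.emod_nonneg _ (by exact_mod_cast hn.ne')
      have h2 : w i % (n : ℤ) < n := Int.emod_lt_of_pos _ (by exact_mod_cast hn)
      omega
    set g : Fin d → Fin n := fun i => ⟨(w i % (n : ℤ)).toNat, hb i⟩ with hg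
    have hcast : (fun i => ((g i : ℕ) : ℤ)) = fun i => w i % (n : ℤ) := by
      funext i
      have h1 : 0 ≤ w i % (n : ℤ) := Int.emod_nonneg _ (by exact_mod_cast hn.ne')
      simp [hg, Int.toNat_of_nonneg h1]
    have := congrFun h g
    simp only at this
    rw [hcast] at this
    show x w = y w
    rw [hkey x hx w, hkey y hy w, this]
  exact Set.toFinite _

theorem reversible_not_globally_universal {d : ℕ} (S : Type) [Finite S]
    [TopologicalSpace S] [DiscreteTopology S]
    (G : Conf d S → Conf d S) (hG : IsCellularTransformaton G)
    (hrev : Function.Bijective G) :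
    ¬ GloballySimulates G (fun _ : Conf d Bool => (fun _ => false : Conf d Bool)) := by
  rintro ⟨v, τ, E, dom, D, hsim, _hSFT, _hDc, _hM, hDE, _hEc, M₁, M₂, _h1det, h2det, hEcomm⟩
  classical
  -- G commutes with shifts
  have hGcomm : ∀ (a : Fin d → ℤ) (c : Conf d S), G (shift a c) = shift a (G c) := by
    obtain ⟨k, nn, f, hf⟩ := hG
    intro a c
    funext w
    rw [hf, shift]
    rw [hf]
    congr 1
    funext i
    simp [shift, add_assoc]
  have hGit : ∀ (t : ℕ) (a : Fin d → ℤ) (c : Conf d S),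
      G^[t] (shift a c) = shift a (G^[t] c) := by
    intro t
    induction t with
    | zero => intro a c; simp
    | succ t ih =>
        intro a c
        rw [Function.iterate_succ_apply, Function.iterate_succ_apply, hGcomm, ih]
  set H : Conf d S → Conf d S := fun x => shift v (G^[τ] x) with hHdef
  have hHcomm : ∀ (a : Fin d → ℤ) (x : Conf d S), H (shift a x) = shift a (H x) := by
    intro a x
    simp only [hHdef]
    rw [hGit, shift_shift, shift_shift, add_comm]
  have hHinj : Function.Injective H := by
    intro x y h
    exact (hrev.injective.iterate τ) (shift_injective v h)
  -- the simulation forces H to map dom into the D-fiber of the all-false configuration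
  have hHdom : ∀ x ∈ dom, H x ∈ dom ∧ D (H x) = (fun _ => false : Conf d Bool) := by
    intro x hx
    obtain ⟨hsub, himg⟩ := hsim (D x)
    have hxmem : x ∈ {x' | x' ∈ dom ∧ D x' = D x} := ⟨hx, rfl⟩
    have hmem : H x ∈ (shift v ∘ G^[τ]) '' {x' | x' ∈ dom ∧ D x' = D x} :=
      ⟨x, hxmem, rfl⟩
    refine ⟨hsub hmem, ?_⟩
    have h2 : D (H x) ∈ D '' ((shift v ∘ G^[τ]) '' {x' | x' ∈ dom ∧ D x' = D x}) :=
      ⟨H x, hmem, rfl⟩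
    rw [himg] at h2
    exact h2
  -- the encoding of the all-true configuration is periodic
  set c₁ : Conf d Bool := fun _ => true with hc₁
  set n : ℕ := M₂.det.natAbs with hn
  have hnpos : 0 < n := Int.natAbs_pos.mpr h2det
  have hE1 : ∀ w : Fin d → ℤ, shift (M₂.mulVec w) (E c₁) = E c₁ := by
    intro w
    have h := hEcomm w c₁
    have hcst : shift (M₁.mulVec w) c₁ = c₁ := by funext u; rfl
    rw [hcst] at h
    exact h
  have hE2 : ∀ w : Fin d → ℤ, shift (M₂.det • w) (E c₁) = E c₁ := by
    intro w
    have hdet : M₂.det • w = M₂.mulVec (M₂.adjugate.mulVec w) := by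
      rw [Matrix.mulVec_mulVec, Matrix.mul_adjugate, Matrix.smul_mulVec,
        Matrix.one_mulVec]
    rw [hdet]
    exact hE1 _
  have hE3 : ∀ w : Fin d → ℤ, shift ((n : ℤ) • w) (E c₁) = E c₁ := by
    intro w
    rcases Int.natAbs_eq M₂.det with h | h
    · rw [show ((n : ℤ) • w) = M₂.det • w by rw [hn, ← h]]
      exact hE2 w
    · have : ((n : ℤ) • w) = M₂.det • (-w) := by
        rw [h, smul_neg, neg_smul, neg_neg, hn]
      rw [this]
      exact hE2 _
  -- the finite set of periodic domain configurations
  set T : Set (Conf d S) := {x | x ∈ dom ∧ ∀ w, shift ((n : ℤ) • w) x = x} with hT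
  have hTfin : T.Finite := (periodic_finite hnpos).subset fun x hx => hx.2
  have hHT : H '' T ⊆ T := by
    rintro _ ⟨x, hx, rfl⟩
    refine ⟨(hHdom x hx.1).1, fun w => ?_⟩
    rw [← hHcomm, hx.2 w]
  have hEq : H '' T = T :=
    Set.eq_of_subset_of_ncard_le hHT
      (le_of_eq (Set.ncard_image_of_injective T hHinj).symm) hTfin
  have hmemT : E c₁ ∈ T := ⟨(hDE c₁).1, hE3⟩
  rw [← hEq] at hmemT
  obtain ⟨x, hxT, hx⟩ := hmemT
  have hfalse : D (E c₁) = (fun _ => false : Conf d Bool) := by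
    rw [← hx]; exact (hHdom x hxT.1).2
  rw [(hDE c₁).2] at hfalse
  exact absurd (congrFun hfalse 0) (by simp [hc₁])
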